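/- arXiv:2004.02351 — 6 statements merged into one kernel-verified Lean document; each statement's English description precedes it below -/
import Mathlib

section
/- Let k ≥ 1 be an integer and let g : ℝ → ℝ be of class C^{k+1} on an open interval I containing 0, with g(0) = 0 and g'(0) = 0. Define ḡ : I → ℝ by ḡ(t) = g(t)/t for t ≠ 0 and ḡ(0) = 0. Then ḡ is of class C^k on I. -/
open Set MeasureTheory intervalIntegral

private lemma smul_mem_uIcc' {s t : ℝ} (hs0 : 0 ≤ s) (hs1 : s ≤ 1) :
    s * t ∈ Set.uIcc 0 t := by
  rcases le_total 0 t with h | h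
  · rw [Set.uIcc_of_le h]
    constructor <;> nlinarith
  · rw [Set.uIcc_of_ge h]
    constructor <;> nlinarith

private lemma abs_pow_mul_le {s x M : ℝ} (hs0 : 0 ≤ s) (hs1 : s ≤ 1) (hx : |x| ≤ M) (j : ℕ) :
    |s ^ j * x| ≤ M := by
  rw [abs_mul, abs_pow, abs_of_nonneg hs0]
  calc s ^ j * |x| ≤ 1 * M :=
        mul_le_mul (pow_le_one₀ hs0 hs1) hx (abs_nonneg x) zero_le_one
    _ = M := one_mul M

private lemma uIoc_subset_Icc01 : Set.uIoc (0:ℝ) 1 ⊆ Set.Icc 0 1 := by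
  rw [Set.uIoc_of_le zero_le_one]
  exact Set.Ioc_subset_Icc_self

/-- local setup: near `t₀ ∈ (a,b)`, the points `s * t` stay in a fixed compact
subinterval of `(a,b)` on which a continuous `ψ` is bounded. -/
private lemma bound_setup {a b : ℝ} (ha : a < 0) (hb : 0 < b) {t₀ : ℝ}
    (ht₀ : t₀ ∈ Set.Ioo a b) {ψ : ℝ → ℝ} (hψ : ContinuousOn ψ (Set.Ioo a b)) :
    ∃ r > 0, ∃ M : ℝ, ∀ s ∈ Set.Icc (0:ℝ) 1, ∀ t ∈ Metric.ball t₀ r,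
      t ∈ Set.Ioo a b ∧ s * t ∈ Set.Ioo a b ∧ |ψ (s * t)| ≤ M := by
  obtain ⟨hta, htb⟩ := ht₀
  set r := min ((t₀ - a) / 2) ((b - t₀) / 2) with hr_def
  have hr : 0 < r := lt_min (by linarith) (by linarith)
  have hr1 : r ≤ (t₀ - a) / 2 := min_le_left _ _
  have hr2 : r ≤ (b - t₀) / 2 := min_le_right _ _
  set K := Set.Icc (min (t₀ - r) 0) (max (t₀ + r) 0) with hK_def
  have hK : K ⊆ Set.Ioo a b := by
    intro x hx
    constructor
    · exact lt_of_lt_of_le (lt_min (by linarith) ha) hx.1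
    · exact lt_of_le_of_lt hx.2 (max_lt (by linarith) hb)
  have h0K : (0:ℝ) ∈ K := ⟨min_le_right _ _, le_max_right _ _⟩
  obtain ⟨M, hM⟩ := isCompact_Icc.exists_bound_of_continuousOn (hψ.mono hK)
  refine ⟨r, hr, M, ?_⟩
  intro s hs t htball
  have htK : t ∈ K := by
    rw [Metric.mem_ball, Real.dist_eq, abs_lt] at htball
    exact ⟨le_trans (min_le_left _ _) (by linarith), le_trans (by linarith) (le_max_left _ _)⟩
  have hstK : s * t ∈ K :=
    Set.ordConnected_Icc.uIcc_subset h0K htK (smul_mem_uIcc' hs.1 hs.2)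
  exact ⟨hK htK, hK hstK, hM _ hstK⟩

private lemma aux_param (a b : ℝ) (ha : a < 0) (hb : 0 < b) :
    ∀ (m : ℕ), ∀ (j : ℕ) (φ : ℝ → ℝ), ContDiffOn ℝ m φ (Set.Ioo a b) →
      ContDiffOn ℝ m (fun t => ∫ s in (0:ℝ)..1, s ^ j * φ (s * t)) (Set.Ioo a b) := by
  have h0mem : (0:ℝ) ∈ Set.Ioo a b := ⟨ha, hb⟩
  have hsub : ∀ {t : ℝ}, t ∈ Set.Ioo a b → ∀ {s : ℝ}, s ∈ Set.Icc (0:ℝ) 1 →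
      s * t ∈ Set.Ioo a b := fun {t} ht {s} hs =>
    Set.ordConnected_Ioo.uIcc_subset h0mem ht (smul_mem_uIcc' hs.1 hs.2)
  have hcont_s : ∀ (ψ : ℝ → ℝ), ContinuousOn ψ (Set.Ioo a b) → ∀ (j : ℕ) {t : ℝ},
      t ∈ Set.Ioo a b → ContinuousOn (fun s : ℝ => s ^ j * ψ (s * t)) (Set.Icc 0 1) :=
    fun ψ hψ j t ht =>
      ((continuous_pow j).continuousOn).mul
        (hψ.comp ((continuous_id.mul continuous_const).continuousOn)
          (fun s hs => hsub ht hs))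
  intro m
  induction m with
  | zero =>
    intro j φ hφ
    rw [CharP.cast_eq_zero, contDiffOn_zero] at hφ ⊢
    intro t₀ ht₀
    apply ContinuousAt.continuousWithinAt
    obtain ⟨r, hr, M, hM⟩ := bound_setup ha hb ht₀ hφ
    apply intervalIntegral.continuousAt_of_dominated_interval (bound := fun _ => M)
    · filter_upwards [Metric.ball_mem_nhds t₀ hr] with t htball
      have ht : t ∈ Set.Ioo a b := (hM 0 (by simp) t htball).1
      exact ((hcont_s φ hφ j ht).mono uIoc_subset_Icc01).aestronglyMeasurable
        measurableSet_uIoc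
    · filter_upwards [Metric.ball_mem_nhds t₀ hr] with t htball
      filter_upwards with s hs
      have hs' : s ∈ Set.Icc (0:ℝ) 1 := uIoc_subset_Icc01 hs
      exact abs_pow_mul_le hs'.1 hs'.2 (hM s hs' t htball).2.2 j
    · exact intervalIntegrable_const
    · filter_upwards with s hs
      have hs' : s ∈ Set.Icc (0:ℝ) 1 := uIoc_subset_Icc01 hs
      exact continuousAt_const.mul
        ((hφ.continuousAt (isOpen_Ioo.mem_nhds (hsub ht₀ hs'))).comp
          ((continuous_const.mul continuous_id).continuousAt))
  | succ m ih =>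
    intro j φ hφ
    have hφ' : ContDiffOn ℝ m (deriv φ) (Set.Ioo a b) :=
      hφ.deriv_of_isOpen isOpen_Ioo (by exact_mod_cast le_rfl)
    have hφdiff : ∀ x ∈ Set.Ioo a b, HasDerivAt φ (deriv φ x) x := fun x hx =>
      (((hφ.differentiableOn (by simp)) x hx).differentiableAt
        (isOpen_Ioo.mem_nhds hx)).hasDerivAt
    have key : ∀ t₀ ∈ Set.Ioo a b, HasDerivAt (fun t => ∫ s in (0:ℝ)..1, s ^ j * φ (s * t))
        (∫ s in (0:ℝ)..1, s ^ (j + 1) * deriv φ (s * t₀)) t₀ := by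
      intro t₀ ht₀
      obtain ⟨r, hr, M, hM⟩ := bound_setup ha hb ht₀ hφ'.continuousOn
      refine (intervalIntegral.hasDerivAt_integral_of_dominated_loc_of_deriv_le
        (F := fun t s => s ^ j * φ (s * t)) (F' := fun t s => s ^ (j + 1) * deriv φ (s * t))
        (bound := fun _ => M) (Metric.ball_mem_nhds t₀ hr) ?_ ?_ ?_ ?_ ?_ ?_).2
      · filter_upwards [Metric.ball_mem_nhds t₀ hr] with t htball
        have ht : t ∈ Set.Ioo a b := (hM 0 (by simp) t htball).1
        exact ((hcont_s φ hφ.continuousOn j ht).mono uIoc_subset_Icc01).aestronglyMeasurable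
          measurableSet_uIoc
      · exact ((hcont_s φ hφ.continuousOn j ht₀).mono
          (by rw [Set.uIcc_of_le (zero_le_one' ℝ)])).intervalIntegrable
      · exact ((hcont_s (deriv φ) hφ'.continuousOn (j+1) ht₀).mono
          uIoc_subset_Icc01).aestronglyMeasurable measurableSet_uIoc
      · filter_upwards with s hs t htball
        have hs' : s ∈ Set.Icc (0:ℝ) 1 := uIoc_subset_Icc01 hs
        exact abs_pow_mul_le hs'.1 hs'.2 (hM s hs' t htball).2.2 (j+1)
      · exact intervalIntegrable_const
      · filter_upwards with s hs t htball
        have hs' : s ∈ Set.Icc (0:ℝ) 1 := uIoc_subset_Icc01 hs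
        have hst : s * t ∈ Set.Ioo a b := (hM s hs' t htball).2.1
        have h1 : HasDerivAt (fun u : ℝ => s * u) s t := by
          simpa using (hasDerivAt_id t).const_mul s
        have h3 : HasDerivAt (fun u : ℝ => φ (s * u)) (deriv φ (s * t) * s) t :=
          (hφdiff _ hst).comp t h1
        have h4 := h3.const_mul (s ^ j)
        convert h4 using 1
        · rfl
        ring
    rw [show (((m+1 : ℕ)) : WithTop ℕ∞) = (m : WithTop ℕ∞) + 1 by norm_cast]
    rw [contDiffOn_succ_iff_deriv_of_isOpen isOpen_Ioo]
    refine ⟨fun t ht => (key t ht).differentiableAt.differentiableWithinAt, ?_, ?_⟩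
    · intro h
      simp at h
    · exact (ih (j + 1) (deriv φ) hφ').congr fun t ht => (key t ht).deriv

/-- If `g` is `C^{k+1}` on an open interval containing `0` with `g 0 = 0` and
`g' 0 = 0`, then `t ↦ g t / t` (extended by `0` at `0`) is `C^k` there. -/
theorem stmt_0 (k : ℕ) (hk : 1 ≤ k) (a b : ℝ) (ha : a < 0) (hb : 0 < b)
    (g : ℝ → ℝ) (hg : ContDiffOn ℝ (k + 1) g (Set.Ioo a b))
    (hg0 : g 0 = 0) (hg'0 : deriv g 0 = 0) :
    ContDiffOn ℝ k (fun t : ℝ => if t = 0 then 0 else g t / t) (Set.Ioo a b) := by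
  have h0mem : (0:ℝ) ∈ Set.Ioo a b := ⟨ha, hb⟩
  have hg' : ContDiffOn ℝ k (deriv g) (Set.Ioo a b) :=
    hg.deriv_of_isOpen isOpen_Ioo (by exact_mod_cast le_rfl)
  have hΦ := aux_param a b ha hb k 0 (deriv g) hg'
  refine hΦ.congr ?_
  intro t ht
  by_cases h : t = 0
  · subst h
    simp [hg'0]
  · rw [if_neg h]
    have hsub : Set.uIcc 0 t ⊆ Set.Ioo a b := Set.ordConnected_Ioo.uIcc_subset h0mem ht
    have hderiv : ∀ u ∈ Set.uIcc 0 t, HasDerivAt g (deriv g u) u := fun u hu =>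
      (((hg.differentiableOn (by simp)) u
        (hsub hu)).differentiableAt (isOpen_Ioo.mem_nhds (hsub hu))).hasDerivAt
    have hint : IntervalIntegrable (deriv g) volume 0 t :=
      (hg'.continuousOn.mono hsub).intervalIntegrable
    have hFTC : ∫ u in (0:ℝ)..t, deriv g u = g t - g 0 :=
      intervalIntegral.integral_eq_sub_of_hasDerivAt hderiv hint
    simp only [pow_zero, one_mul]
    rw [intervalIntegral.integral_comp_mul_right (fun u => deriv g u) h]
    rw [zero_mul, one_mul, hFTC, hg0, sub_zero, smul_eq_mul]
    ring
end

section
/- Let m ≥ 1 be an integer, α ≤ −m a real number, and set N = ⌊−α⌋ − m. Let ε₀ > 0 and let φ : ℝ → ℝ be of class C^{N+1} on [0, ε₀]. Let T(t) = Σ_{j=0}^{N} φ^{(j)}(0) t^j / j! be the degree-N Taylor polynomial of φ at 0. Then the function t ↦ t^{α+m−1}(φ(t) − T(t)) is Lebesgue integrable on (0, ε₀), and for every t ∈ (0, ε₀] one has |t^{α+m−1}(φ(t) − T(t))| ≤ (sup_{s∈[0,ε₀]} |φ^{(N+1)}(s)| / (N+1)!) · t^{α+m+N}. -/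
open MeasureTheory

lemma iteratedDerivWithin_inter_aux {n : ℕ} {f : ℝ → ℝ} {s u : Set ℝ} {x : ℝ}
    (hu : u ∈ nhds x) :
    iteratedDerivWithin n f (s ∩ u) x = iteratedDerivWithin n f s x := by
  simp [iteratedDerivWithin, iteratedFDerivWithin_inter hu]

/-- Taylor remainder bound: for `α ≤ -m`, `N = ⌊-α⌋ - m` and `φ` of class
`C^{N+1}` on `[0, ε₀]`, the function `t ↦ t^(α+m-1) (φ t - T t)` (where `T` is
the degree-`N` Taylor polynomial of `φ` at `0`) is integrable on `(0, ε₀)` and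
satisfies the pointwise bound by `(sup |φ^(N+1)| / (N+1)!) t^(α+m+N)`. -/
theorem stmt_2 (m : ℕ) (hm : 1 ≤ m) (α : ℝ) (hα : α ≤ -(m : ℝ))
    (N : ℕ) (hN : (N : ℤ) = ⌊-α⌋ - m)
    (ε₀ : ℝ) (hε₀ : 0 < ε₀) (φ : ℝ → ℝ)
    (hφ : ContDiffOn ℝ (N + 1) φ (Set.Icc 0 ε₀)) :
    IntegrableOn
      (fun t : ℝ => t ^ (α + m - 1) *
        (φ t - ∑ j ∈ Finset.range (N + 1),
          iteratedDerivWithin j φ (Set.Icc 0 ε₀) 0 * t ^ j / (j.factorial : ℝ)))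
      (Set.Ioo 0 ε₀) ∧
    ∀ t ∈ Set.Ioc (0 : ℝ) ε₀,
      |t ^ (α + m - 1) *
        (φ t - ∑ j ∈ Finset.range (N + 1),
          iteratedDerivWithin j φ (Set.Icc 0 ε₀) 0 * t ^ j / (j.factorial : ℝ))| ≤
      sSup ((fun s => |iteratedDerivWithin (N + 1) φ (Set.Icc 0 ε₀) s|) '' Set.Icc 0 ε₀)
        / ((N + 1).factorial : ℝ) * t ^ (α + m + N) := by
  set S := Set.Icc (0 : ℝ) ε₀ with hS
  set C : ℝ := sSup ((fun s => |iteratedDerivWithin (N + 1) φ S s|) '' S) with hC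
  -- the sup is well-behaved
  have hudS : UniqueDiffOn ℝ S := uniqueDiffOn_Icc hε₀
  have hcont : ContinuousOn (iteratedDerivWithin (N + 1) φ S) S :=
    hφ.continuousOn_iteratedDerivWithin (by exact_mod_cast le_rfl) hudS
  have hbdd : BddAbove ((fun s => |iteratedDerivWithin (N + 1) φ S s|) '' S) :=
    (isCompact_Icc.image_of_continuousOn hcont.abs).bddAbove
  have hmem0 : (0 : ℝ) ∈ S := ⟨le_rfl, hε₀.le⟩
  have hC0 : 0 ≤ C :=
    le_trans (abs_nonneg _) (le_csSup hbdd ⟨0, hmem0, rfl⟩)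
  have hCb : ∀ y ∈ S, |iteratedDerivWithin (N + 1) φ S y| ≤ C :=
    fun y hy => le_csSup hbdd ⟨y, hy, rfl⟩
  -- the pointwise bound
  have key : ∀ t ∈ Set.Ioc (0 : ℝ) ε₀,
      |t ^ (α + m - 1) *
        (φ t - ∑ j ∈ Finset.range (N + 1),
          iteratedDerivWithin j φ S 0 * t ^ j / (j.factorial : ℝ))| ≤
      C / ((N + 1).factorial : ℝ) * t ^ (α + m + N) := by
    intro t ht
    obtain ⟨ht0, htε⟩ := ht
    have hsub : Set.Icc (0 : ℝ) t ⊆ S := Set.Icc_subset_Icc le_rfl htε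
    have hinter : Set.Icc (0 : ℝ) t = S ∩ Set.Iic t := by
      ext x
      simp only [Set.mem_Icc, Set.mem_inter_iff, Set.mem_Iic, hS]
      exact ⟨fun ⟨h1, h2⟩ => ⟨⟨h1, h2.trans htε⟩, h2⟩, fun ⟨⟨h1, _⟩, h2⟩ => ⟨h1, h2⟩⟩
    have hf : ContDiffOn ℝ N φ (Set.Icc 0 t) :=
      (hφ.of_le (by exact_mod_cast Nat.le_succ N)).mono hsub
    have hf' : DifferentiableOn ℝ (iteratedDerivWithin N φ (Set.Icc 0 t)) (Set.Ioo 0 t) :=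
      ((hφ.mono hsub).differentiableOn_iteratedDerivWithin
        (by exact_mod_cast Nat.lt_succ_self N) (uniqueDiffOn_Icc ht0)).mono
        Set.Ioo_subset_Icc_self
    obtain ⟨x', hx', hEq⟩ : ∃ x' ∈ Set.Ioo 0 t, φ t - taylorWithinEval φ N (Set.Icc 0 t) 0 t =
        iteratedDerivWithin (N + 1) φ (Set.Icc 0 t) x' * (t - 0) ^ (N + 1) / ((N + 1).factorial : ℝ) := by
      have h := taylor_mean_remainder_lagrange (x := t) (x₀ := 0) (n := N) ht0.ne
        (by rw [Set.uIcc_of_le ht0.le]; exact hf)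
        (by rw [Set.uIcc_of_le ht0.le, Set.uIoo_of_le ht0.le]; exact hf')
      rw [Set.uIcc_of_le ht0.le, Set.uIoo_of_le ht0.le] at h
      exact h
    -- identify the Taylor polynomial
    have hT : taylorWithinEval φ N (Set.Icc 0 t) 0 t =
        ∑ j ∈ Finset.range (N + 1),
          iteratedDerivWithin j φ S 0 * t ^ j / (j.factorial : ℝ) := by
      rw [taylor_within_apply]
      refine Finset.sum_congr rfl fun j _ => ?_
      have : iteratedDerivWithin j φ (Set.Icc 0 t) 0 = iteratedDerivWithin j φ S 0 := by
        rw [hinter]; exact iteratedDerivWithin_inter_aux (Iic_mem_nhds ht0)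
      rw [this, smul_eq_mul]
      ring
    have hderiv : iteratedDerivWithin (N + 1) φ (Set.Icc 0 t) x' =
        iteratedDerivWithin (N + 1) φ S x' := by
      rw [hinter]; exact iteratedDerivWithin_inter_aux (Iic_mem_nhds hx'.2)
    have hrem : |φ t - ∑ j ∈ Finset.range (N + 1),
        iteratedDerivWithin j φ S 0 * t ^ j / (j.factorial : ℝ)| ≤
        C * t ^ (N + 1) / ((N + 1).factorial : ℝ) := by
      rw [← hT, hEq, sub_zero, hderiv]
      rw [abs_div, abs_mul, abs_of_nonneg (pow_nonneg ht0.le _),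
        abs_of_nonneg (by positivity : (0:ℝ) ≤ (((N+1).factorial : ℕ) : ℝ))]
      gcongr
      exact hCb x' ⟨hx'.1.le, hx'.2.le.trans htε⟩
    have hrpow : (0:ℝ) < t ^ (α + m - 1) := Real.rpow_pos_of_pos ht0 _
    rw [abs_mul, abs_of_nonneg hrpow.le]
    calc t ^ (α + m - 1) * |φ t - ∑ j ∈ Finset.range (N + 1),
            iteratedDerivWithin j φ S 0 * t ^ j / (j.factorial : ℝ)|
        ≤ t ^ (α + m - 1) * (C * t ^ (N + 1) / ((N + 1).factorial : ℝ)) := by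
          gcongr
      _ = C / ((N + 1).factorial : ℝ) * t ^ (α + m + N) := by
          have hnp : (t : ℝ) ^ (N + 1 : ℕ) = t ^ ((N : ℝ) + 1) := by
            rw [← Real.rpow_natCast t (N + 1)]; push_cast; ring_nf
          have h2 : t ^ (α + m - 1) * t ^ ((N:ℝ) + 1) = t ^ (α + (m:ℝ) + N) := by
            rw [← Real.rpow_add ht0]; congr 1; ring
          rw [hnp, ← h2]
          generalize t ^ (α + m - 1) = a
          generalize t ^ ((N:ℝ) + 1) = b
          ring
  refine ⟨?_, key⟩
  -- integrability
  have hexp : (-1 : ℝ) < α + m + N := by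
    have hNr : (N : ℝ) = (⌊-α⌋ : ℝ) - m := by exact_mod_cast hN
    have := Int.sub_one_lt_floor (-α)
    have : (-α : ℝ) - 1 < (⌊-α⌋ : ℝ) := by exact_mod_cast this
    rw [hNr]; linarith
  have hg : IntegrableOn (fun t : ℝ => C / ((N + 1).factorial : ℝ) * t ^ (α + m + N))
      (Set.Ioo 0 ε₀) := by
    have h1 : IntegrableOn (fun t : ℝ => t ^ (α + m + N)) (Set.Ioo 0 ε₀) :=
      ((intervalIntegral.intervalIntegrable_rpow' hexp (a := 0) (b := ε₀)).1).mono_set Set.Ioo_subset_Ioc_self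
    exact h1.const_mul _
  have hmeas : AEStronglyMeasurable
      (fun t : ℝ => t ^ (α + m - 1) *
        (φ t - ∑ j ∈ Finset.range (N + 1),
          iteratedDerivWithin j φ S 0 * t ^ j / (j.factorial : ℝ)))
      (volume.restrict (Set.Ioo 0 ε₀)) := by
    apply ContinuousOn.aestronglyMeasurable _ measurableSet_Ioo
    apply ContinuousOn.mul
    · exact fun x hx => (Real.continuousAt_rpow_const x _ (Or.inl hx.1.ne')).continuousWithinAt
    · apply ContinuousOn.sub
      · exact hφ.continuousOn.mono fun x hx => ⟨hx.1.le, hx.2.le⟩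
      · exact Continuous.continuousOn (by continuity)
  refine Integrable.mono' hg hmeas ?_
  filter_upwards [ae_restrict_mem measurableSet_Ioo] with t ht
  rw [Real.norm_eq_abs]
  exact key t ⟨ht.1, ht.2.le⟩
end

section
/- Let m ≥ 1 be an integer and let α < −m be a real number that is not an integer. Set N = ⌊−α⌋ − m. Let ε₀ > 0 and let φ : ℝ → ℝ be of class C^{N+1} on [0, ε₀]. Let T(t) = Σ_{j=0}^{N} φ^{(j)}(0) t^j / j! be the degree-N Taylor polynomial of φ at 0. Then as ε → 0⁺, the quantity ∫_ε^{ε₀} t^{α+m−1} φ(t) dt + Σ_{j=0}^{N} (φ^{(j)}(0) / ((α+m+j) · j!)) · ε^{α+m+j} converges to the finite limit Σ_{j=0}^{N} (φ^{(j)}(0) / ((α+m+j) · j!)) · ε₀^{α+m+j} + ∫_0^{ε₀} t^{α+m−1}(φ(t) − T(t)) dt, where the last integral is finite. -/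
open MeasureTheory Set Filter


theorem hadamard_aux (β : ℝ) (N : ℕ) (hβN : -1 < β + N)
    (hj : ∀ j : ℕ, j ≤ N → β + (j : ℝ) ≠ 0)
    (ε₀ : ℝ) (hε₀ : 0 < ε₀) (φ : ℝ → ℝ) (d : ℕ → ℝ)
    (hcont : ContinuousOn φ (Set.Icc 0 ε₀))
    (C : ℝ)
    (hC : ∀ x ∈ Set.Icc (0:ℝ) ε₀,
      |φ x - ∑ j ∈ Finset.range (N + 1), d j * x ^ j / (j.factorial : ℝ)| ≤ C * x ^ (N + 1)) :
    IntegrableOn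
      (fun t : ℝ => t ^ (β - 1) *
        (φ t - ∑ j ∈ Finset.range (N + 1), d j * t ^ j / (j.factorial : ℝ)))
      (Set.Ioo 0 ε₀) ∧
    Tendsto
      (fun ε : ℝ => (∫ t in ε..ε₀, t ^ (β - 1) * φ t) +
        ∑ j ∈ Finset.range (N + 1), d j / ((β + j) * (j.factorial : ℝ)) * ε ^ (β + j))
      (nhdsWithin 0 (Set.Ioi 0))
      (nhds ((∑ j ∈ Finset.range (N + 1),
          d j / ((β + j) * (j.factorial : ℝ)) * ε₀ ^ (β + j)) +
        ∫ t in Set.Ioo (0 : ℝ) ε₀, t ^ (β - 1) *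
          (φ t - ∑ j ∈ Finset.range (N + 1), d j * t ^ j / (j.factorial : ℝ)))) := by
  set T : ℝ → ℝ := fun t => ∑ j ∈ Finset.range (N + 1), d j * t ^ j / (j.factorial : ℝ)
    with hTdef
  set g : ℝ → ℝ := fun t => t ^ (β - 1) * (φ t - T t) with hgdef
  have hTcont : Continuous T := by
    apply continuous_finset_sum
    intro j _
    exact (continuous_const.mul (continuous_pow j)).div_const _
  have hgcont : ContinuousOn g (Set.Ioo 0 ε₀) := by
    apply ContinuousOn.mul
    · intro t ht
      exact (Real.continuousAt_rpow_const t _ (Or.inl (ne_of_gt ht.1))).continuousWithinAt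
    · exact (hcont.mono Ioo_subset_Icc_self).sub hTcont.continuousOn
  -- integrability
  have hint : IntegrableOn g (Set.Ioo 0 ε₀) := by
    have hdom : IntegrableOn (fun t : ℝ => |C| * t ^ (β + N)) (Set.Ioo 0 ε₀) := by
      exact ((intervalIntegral.integrableOn_Ioo_rpow_iff hε₀).2 hβN).const_mul |C|
    refine hdom.mono' (hgcont.aestronglyMeasurable measurableSet_Ioo) ?_
    rw [ae_restrict_iff' measurableSet_Ioo]
    filter_upwards with t ht
    have ht0 : 0 < t := ht.1
    have hrp : (0:ℝ) ≤ t ^ (β - 1) := Real.rpow_nonneg ht0.le _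
    have h1 : ‖g t‖ = t ^ (β - 1) * |φ t - T t| := by
      rw [hgdef]; simp only [Real.norm_eq_abs, abs_mul, abs_of_nonneg hrp]
    rw [h1]
    calc t ^ (β - 1) * |φ t - T t| ≤ t ^ (β - 1) * (C * t ^ (N + 1)) :=
          mul_le_mul_of_nonneg_left (hC t ⟨ht0.le, ht.2.le⟩) hrp
      _ ≤ |C| * t ^ (β + N) := by
          have : t ^ (β - 1) * t ^ ((N + 1 : ℕ) : ℝ) = t ^ (β + N) := by
            rw [← Real.rpow_add ht0]; congr 1; push_cast; ring
          rw [← Real.rpow_natCast t (N + 1)]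
          calc t ^ (β - 1) * (C * t ^ ((N + 1 : ℕ) : ℝ))
              = C * (t ^ (β - 1) * t ^ ((N + 1 : ℕ) : ℝ)) := by ring
            _ = C * t ^ (β + N) := by rw [this]
            _ ≤ |C| * t ^ (β + N) :=
                mul_le_mul_of_nonneg_right (le_abs_self C) (Real.rpow_nonneg ht0.le _)
  refine ⟨hint, ?_⟩
  have hIoc : IntegrableOn g (Set.Ioc 0 ε₀) :=
    (integrableOn_Ioc_iff_integrableOn_Ioo).2 hint
  -- the limit of the tail integral
  have hmem : Set.Ioo (0:ℝ) ε₀ ∈ nhdsWithin (0:ℝ) (Set.Ioi 0) :=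
    Ioo_mem_nhdsGT_of_mem ⟨le_refl 0, hε₀⟩
  have hmeasure : Tendsto (fun ε : ℝ => volume (Set.Ioc (0:ℝ) ε))
      (nhdsWithin 0 (Set.Ioi 0)) (nhds 0) := by
    have h1 : Tendsto (fun ε : ℝ => ε) (nhdsWithin (0:ℝ) (Set.Ioi 0)) (nhds 0) :=
      (continuous_id.tendsto 0).mono_left nhdsWithin_le_nhds
    have := (ENNReal.continuous_ofReal.tendsto 0).comp h1
    simpa [Real.volume_Ioc, Function.comp_def] using this
  have hind : Integrable ((Set.Ioc (0:ℝ) ε₀).indicator g) volume :=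
    (integrable_indicator_iff measurableSet_Ioc).2 hIoc
  have hsmall : Tendsto (fun ε : ℝ => ∫ t in Set.Ioc (0:ℝ) ε, g t)
      (nhdsWithin 0 (Set.Ioi 0)) (nhds 0) := by
    have h0 := hind.tendsto_setIntegral_nhds_zero (s := fun ε : ℝ => Set.Ioc (0:ℝ) ε) hmeasure
    refine h0.congr' ?_
    filter_upwards [hmem] with ε hε
    rw [setIntegral_indicator measurableSet_Ioc,
      Set.inter_eq_left.2 (Set.Ioc_subset_Ioc_right hε.2.le)]
  have htail : Tendsto (fun ε : ℝ => ∫ t in ε..ε₀, g t)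
      (nhdsWithin 0 (Set.Ioi 0)) (nhds (∫ t in Set.Ioo (0:ℝ) ε₀, g t)) := by
    have heq : ∀ᶠ ε in nhdsWithin (0:ℝ) (Set.Ioi 0),
        (∫ t in Set.Ioo (0:ℝ) ε₀, g t) - (∫ t in Set.Ioc (0:ℝ) ε, g t)
          = ∫ t in ε..ε₀, g t := by
      filter_upwards [hmem] with ε hε
      have h1 : IntervalIntegrable g volume 0 ε :=
        (intervalIntegrable_iff_integrableOn_Ioc_of_le hε.1.le).2
          (hIoc.mono_set (Set.Ioc_subset_Ioc_right hε.2.le))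
      have h2 : IntervalIntegrable g volume ε ε₀ :=
        (intervalIntegrable_iff_integrableOn_Ioc_of_le hε.2.le).2
          (hIoc.mono_set (Set.Ioc_subset_Ioc_left hε.1.le))
      have hadd := intervalIntegral.integral_add_adjacent_intervals h1 h2
      have h3 : (∫ t in (0:ℝ)..ε₀, g t) = ∫ t in Set.Ioo (0:ℝ) ε₀, g t := by
        rw [intervalIntegral.integral_of_le hε₀.le, integral_Ioc_eq_integral_Ioo]
      have h4 : (∫ t in (0:ℝ)..ε, g t) = ∫ t in Set.Ioc (0:ℝ) ε, g t :=
        intervalIntegral.integral_of_le hε.1.le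
      linarith [hadd, h3, h4]
    have := (tendsto_const_nhds (x := ∫ t in Set.Ioo (0:ℝ) ε₀, g t)
      (f := nhdsWithin (0:ℝ) (Set.Ioi 0))).sub hsmall
    simpa using this.congr' heq
  -- the key algebraic identity
  have hkey : ∀ᶠ ε in nhdsWithin (0:ℝ) (Set.Ioi 0),
      (∫ t in ε..ε₀, g t) +
        ∑ j ∈ Finset.range (N + 1), d j / ((β + j) * (j.factorial : ℝ)) * ε₀ ^ (β + j)
      = (∫ t in ε..ε₀, t ^ (β - 1) * φ t) +
        ∑ j ∈ Finset.range (N + 1), d j / ((β + j) * (j.factorial : ℝ)) * ε ^ (β + j) := by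
    filter_upwards [hmem] with ε hε
    have hε0 : (0:ℝ) < ε := hε.1
    have huIcc : Set.uIcc ε ε₀ = Set.Icc ε ε₀ := Set.uIcc_of_le hε.2.le
    have hpos : ∀ t ∈ Set.uIcc ε ε₀, 0 < t := by
      intro t ht; rw [huIcc] at ht; exact lt_of_lt_of_le hε0 ht.1
    have hrpc : ∀ r : ℝ, ContinuousOn (fun t : ℝ => t ^ r) (Set.uIcc ε ε₀) := by
      intro r t ht
      exact (Real.continuousAt_rpow_const t r (Or.inl (ne_of_gt (hpos t ht)))).continuousWithinAt
    have hsub : Set.uIcc ε ε₀ ⊆ Set.Icc 0 ε₀ := by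
      rw [huIcc]; exact Set.Icc_subset_Icc hε0.le le_rfl
    have hi1 : IntervalIntegrable (fun t : ℝ => t ^ (β - 1) * φ t) volume ε ε₀ :=
      ((hrpc (β - 1)).mul (hcont.mono hsub)).intervalIntegrable
    have hi2 : IntervalIntegrable (fun t : ℝ => t ^ (β - 1) * T t) volume ε ε₀ :=
      ((hrpc (β - 1)).mul hTcont.continuousOn).intervalIntegrable
    have hgsplit : (∫ t in ε..ε₀, g t)
        = (∫ t in ε..ε₀, t ^ (β - 1) * φ t) - ∫ t in ε..ε₀, t ^ (β - 1) * T t := by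
      rw [← intervalIntegral.integral_sub hi1 hi2]
      apply intervalIntegral.integral_congr
      intro t _
      simp [hgdef, mul_sub]
    have hT : (∫ t in ε..ε₀, t ^ (β - 1) * T t)
        = ∑ j ∈ Finset.range (N + 1),
            d j / ((β + j) * (j.factorial : ℝ)) * (ε₀ ^ (β + j) - ε ^ (β + j)) := by
      have hcongr : (∫ t in ε..ε₀, t ^ (β - 1) * T t)
          = ∫ t in ε..ε₀, ∑ j ∈ Finset.range (N + 1),
              (d j / (j.factorial : ℝ)) * t ^ (β - 1 + j) := by
        apply intervalIntegral.integral_congr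
        intro t ht
        have ht0 : 0 < t := hpos t ht
        rw [hTdef]
        simp only
        rw [Finset.mul_sum]
        apply Finset.sum_congr rfl
        intro j _
        rw [Real.rpow_add ht0, Real.rpow_natCast]
        ring
      rw [hcongr]
      rw [intervalIntegral.integral_finset_sum]
      · apply Finset.sum_congr rfl
        intro j hjmem
        have hjle : j ≤ N := Nat.lt_succ_iff.mp (Finset.mem_range.mp hjmem)
        have hne : β + (j : ℝ) ≠ 0 := hj j hjle
        have h0ni : (0:ℝ) ∉ Set.uIcc ε ε₀ := by
          intro h0; exact absurd (hpos 0 h0) (lt_irrefl 0)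
        rw [intervalIntegral.integral_const_mul,
          integral_rpow (Or.inr ⟨by intro h; apply hne; linarith [h], h0ni⟩)]
        have hb : β - 1 + (j:ℝ) + 1 = β + j := by ring
        rw [hb]
        have hfac : (j.factorial : ℝ) ≠ 0 := Nat.cast_ne_zero.2 j.factorial_ne_zero
        rw [div_mul_div_comm, div_mul_eq_mul_div, mul_comm (β + (j:ℝ))]
      · intro j _
        exact (continuousOn_const.mul (hrpc (β - 1 + j))).intervalIntegrable
    have hsum : ∑ j ∈ Finset.range (N + 1),
          d j / ((β + j) * (j.factorial : ℝ)) * (ε₀ ^ (β + j) - ε ^ (β + j))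
        = (∑ j ∈ Finset.range (N + 1), d j / ((β + j) * (j.factorial : ℝ)) * ε₀ ^ (β + j))
          - ∑ j ∈ Finset.range (N + 1), d j / ((β + j) * (j.factorial : ℝ)) * ε ^ (β + j) := by
      rw [← Finset.sum_sub_distrib]
      exact Finset.sum_congr rfl fun j _ => mul_sub _ _ _
    rw [hgsplit, hT, hsum]
    ring
  have hlim := (tendsto_const_nhds (x := ∑ j ∈ Finset.range (N + 1),
      d j / ((β + j) * (j.factorial : ℝ)) * ε₀ ^ (β + j))
      (f := nhdsWithin (0:ℝ) (Set.Ioi 0))).add htail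
  have heq2 : (fun ε : ℝ => (∑ j ∈ Finset.range (N + 1),
        d j / ((β + j) * (j.factorial : ℝ)) * ε₀ ^ (β + j)) + ∫ t in ε..ε₀, g t)
      =ᶠ[nhdsWithin (0:ℝ) (Set.Ioi 0)]
      (fun ε : ℝ => (∫ t in ε..ε₀, t ^ (β - 1) * φ t) +
        ∑ j ∈ Finset.range (N + 1), d j / ((β + j) * (j.factorial : ℝ)) * ε ^ (β + j)) := by
    filter_upwards [hkey] with ε h
    linarith [h]
  exact hlim.congr' heq2


/-- Hadamard's finite part (non-integer exponent case): for `α < -m` a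
non-integer real number, `N = ⌊-α⌋ - m` and `φ` of class `C^{N+1}` on `[0, ε₀]`,
the regularized quantity `∫_ε^{ε₀} t^{α+m-1} φ t dt + Σ_j φ^{(j)}(0)/((α+m+j) j!) ε^{α+m+j}`
converges, as `ε → 0⁺`, to
`Σ_j φ^{(j)}(0)/((α+m+j) j!) ε₀^{α+m+j} + ∫_0^{ε₀} t^{α+m-1}(φ t - T t) dt`,
where `T` is the degree-`N` Taylor polynomial of `φ` at `0` and the last
integral is finite. -/
theorem stmt_3 (m : ℕ) (hm : 1 ≤ m) (α : ℝ) (hα : α < -(m : ℝ))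
    (hαint : ∀ n : ℤ, α ≠ (n : ℝ))
    (N : ℕ) (hN : (N : ℤ) = ⌊-α⌋ - m)
    (ε₀ : ℝ) (hε₀ : 0 < ε₀) (φ : ℝ → ℝ)
    (hφ : ContDiffOn ℝ (N + 1) φ (Set.Icc 0 ε₀)) :
    IntegrableOn
      (fun t : ℝ => t ^ (α + m - 1) *
        (φ t - ∑ j ∈ Finset.range (N + 1),
          iteratedDerivWithin j φ (Set.Icc 0 ε₀) 0 * t ^ j / (j.factorial : ℝ)))
      (Set.Ioo 0 ε₀) ∧
    Filter.Tendsto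
      (fun ε : ℝ => (∫ t in ε..ε₀, t ^ (α + m - 1) * φ t) +
        ∑ j ∈ Finset.range (N + 1),
          iteratedDerivWithin j φ (Set.Icc 0 ε₀) 0 / ((α + m + j) * (j.factorial : ℝ))
            * ε ^ (α + m + j))
      (nhdsWithin 0 (Set.Ioi 0))
      (nhds ((∑ j ∈ Finset.range (N + 1),
          iteratedDerivWithin j φ (Set.Icc 0 ε₀) 0 / ((α + m + j) * (j.factorial : ℝ))
            * ε₀ ^ (α + m + j)) +
        ∫ t in Set.Ioo (0 : ℝ) ε₀, t ^ (α + m - 1) *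
          (φ t - ∑ j ∈ Finset.range (N + 1),
            iteratedDerivWithin j φ (Set.Icc 0 ε₀) 0 * t ^ j / (j.factorial : ℝ)))) := by
  have hfloor : ((⌊-α⌋ : ℤ) : ℝ) = (N : ℝ) + m := by
    have : (⌊-α⌋ : ℤ) = (N : ℤ) + m := by omega
    rw [this]; push_cast; ring
  have hβN : -1 < α + m + N := by
    have h1 : -α < (⌊-α⌋ : ℝ) + 1 := Int.lt_floor_add_one (-α)
    rw [hfloor] at h1
    linarith
  have hj : ∀ j : ℕ, j ≤ N → α + m + (j : ℝ) ≠ 0 := by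
    intro j _ h
    exact hαint (-(m + j)) (by push_cast; linarith)
  obtain ⟨C, hC⟩ := exists_taylor_mean_remainder_bound hε₀.le hφ
  have hC' : ∀ x ∈ Set.Icc (0:ℝ) ε₀,
      |φ x - ∑ j ∈ Finset.range (N + 1),
        iteratedDerivWithin j φ (Set.Icc 0 ε₀) 0 * x ^ j / (j.factorial : ℝ)|
        ≤ C * x ^ (N + 1) := by
    intro x hx
    have h := hC x hx
    rw [taylor_within_apply] at h
    have hsum : ∑ k ∈ Finset.range (N + 1),
        (((k.factorial : ℝ))⁻¹ * (x - 0) ^ k) • iteratedDerivWithin k φ (Set.Icc 0 ε₀) 0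
        = ∑ j ∈ Finset.range (N + 1),
          iteratedDerivWithin j φ (Set.Icc 0 ε₀) 0 * x ^ j / (j.factorial : ℝ) := by
      apply Finset.sum_congr rfl
      intro j _
      rw [smul_eq_mul, sub_zero]
      ring
    rw [hsum, Real.norm_eq_abs, sub_zero] at h
    exact h
  exact hadamard_aux (α + m) N hβN hj ε₀ hε₀ φ
    (fun j => iteratedDerivWithin j φ (Set.Icc 0 ε₀) 0) hφ.continuousOn C hC'
end

section
/- Let m ≥ 1 be an integer and let α be an integer with α ≤ −m. Set N = −α − m. Let ε₀ > 0 and let φ : ℝ → ℝ be of class C^{N+1} on [0, ε₀]. Let T(t) = Σ_{j=0}^{N} φ^{(j)}(0) t^j / j! be the degree-N Taylor polynomial of φ at 0. Then as ε → 0⁺, the quantity ∫_ε^{ε₀} t^{α+m−1} φ(t) dt + Σ_{j=0}^{N−1} (φ^{(j)}(0) / ((α+m+j) · j!)) · ε^{α+m+j} + (φ^{(N)}(0)/N!) · log ε converges to the finite limit Σ_{j=0}^{N−1} (φ^{(j)}(0) / ((α+m+j) · j!)) · ε₀^{α+m+j} + (φ^{(N)}(0)/N!) · log ε₀ + ∫_0^{ε₀}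 t^{α+m−1}(φ(t) − T(t)) dt, where the last integral is finite. -/
open MeasureTheory

/-- Hadamard's finite part (integer exponent case, with log counterterm): for
an integer `α ≤ -m`, `N = -α - m` and `φ` of class `C^{N+1}` on `[0, ε₀]`, the
regularized quantity
`∫_ε^{ε₀} t^{α+m-1} φ t dt + Σ_{j<N} φ^{(j)}(0)/((α+m+j) j!) ε^{α+m+j} + (φ^{(N)}(0)/N!) log ε`
converges, as `ε → 0⁺`, to
`Σ_{j<N} φ^{(j)}(0)/((α+m+j) j!) ε₀^{α+m+j} + (φ^{(N)}(0)/N!) log ε₀ + ∫_0^{ε₀} t^{α+m-1}(φ t - T t) dt`,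
where `T` is the degree-`N` Taylor polynomial of `φ` at `0` and the last
integral is finite. -/
theorem stmt_4 (m : ℕ) (hm : 1 ≤ m) (α : ℤ) (hα : α ≤ -(m : ℤ))
    (N : ℕ) (hN : (N : ℤ) = -α - m)
    (ε₀ : ℝ) (hε₀ : 0 < ε₀) (φ : ℝ → ℝ)
    (hφ : ContDiffOn ℝ (N + 1) φ (Set.Icc 0 ε₀)) :
    IntegrableOn
      (fun t : ℝ => t ^ ((α : ℝ) + m - 1) *
        (φ t - ∑ j ∈ Finset.range (N + 1),
          iteratedDerivWithin j φ (Set.Icc 0 ε₀) 0 * t ^ j / (j.factorial : ℝ)))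
      (Set.Ioo 0 ε₀) ∧
    Filter.Tendsto
      (fun ε : ℝ => (∫ t in ε..ε₀, t ^ ((α : ℝ) + m - 1) * φ t) +
        (∑ j ∈ Finset.range N,
          iteratedDerivWithin j φ (Set.Icc 0 ε₀) 0 / (((α : ℝ) + m + j) * (j.factorial : ℝ))
            * ε ^ ((α : ℝ) + m + j)) +
        iteratedDerivWithin N φ (Set.Icc 0 ε₀) 0 / (N.factorial : ℝ) * Real.log ε)
      (nhdsWithin 0 (Set.Ioi 0))
      (nhds ((∑ j ∈ Finset.range N,
          iteratedDerivWithin j φ (Set.Icc 0 ε₀) 0 / (((α : ℝ) + m + j) * (j.factorial : ℝ))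
            * ε₀ ^ ((α : ℝ) + m + j)) +
        iteratedDerivWithin N φ (Set.Icc 0 ε₀) 0 / (N.factorial : ℝ) * Real.log ε₀ +
        ∫ t in Set.Ioo (0 : ℝ) ε₀, t ^ ((α : ℝ) + m - 1) *
          (φ t - ∑ j ∈ Finset.range (N + 1),
            iteratedDerivWithin j φ (Set.Icc 0 ε₀) 0 * t ^ j / (j.factorial : ℝ)))) := by
  have hr : (α : ℝ) + m - 1 = -((N : ℝ) + 1) := by
    have : (N : ℝ) = -(α : ℝ) - m := by exact_mod_cast congrArg (Int.cast : ℤ → ℝ) hN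
    linarith
  set d : ℕ → ℝ := fun j => iteratedDerivWithin j φ (Set.Icc 0 ε₀) 0 with hd
  set g : ℝ → ℝ := fun t : ℝ => t ^ ((α : ℝ) + m - 1) *
      (φ t - ∑ j ∈ Finset.range (N + 1), d j * t ^ j / (j.factorial : ℝ)) with hg
  -- Taylor remainder bound
  obtain ⟨C, hC⟩ := exists_taylor_mean_remainder_bound hε₀.le hφ
  have hT : ∀ x : ℝ, taylorWithinEval φ N (Set.Icc 0 ε₀) 0 x
      = ∑ j ∈ Finset.range (N + 1), d j * x ^ j / (j.factorial : ℝ) := by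
    intro x
    rw [taylor_within_apply]
    refine Finset.sum_congr rfl fun j _ => ?_
    simp [smul_eq_mul, hd]
    ring
  have hRbound : ∀ x ∈ Set.Icc 0 ε₀,
      |φ x - ∑ j ∈ Finset.range (N + 1), d j * x ^ j / (j.factorial : ℝ)| ≤ C * x ^ (N + 1) := by
    intro x hx
    have := hC x hx
    rw [hT] at this
    simpa using this
  have hgbound : ∀ t ∈ Set.Ioo (0:ℝ) ε₀, ‖g t‖ ≤ C := by
    intro t ht
    have ht0 : (0:ℝ) < t := ht.1
    have h1 : ‖g t‖ = t ^ ((α : ℝ) + m - 1) *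
        |φ t - ∑ j ∈ Finset.range (N + 1), d j * t ^ j / (j.factorial : ℝ)| := by
      rw [hg]
      simp [abs_mul, abs_of_nonneg (Real.rpow_nonneg ht0.le _)]
    have h2 : t ^ ((α : ℝ) + m - 1) * (t : ℝ) ^ (N + 1) = 1 := by
      have he : -((N : ℝ) + 1) + ((N + 1 : ℕ) : ℝ) = 0 := by push_cast; ring
      rw [hr, ← Real.rpow_natCast t (N + 1), ← Real.rpow_add ht0, he, Real.rpow_zero]
    calc ‖g t‖ ≤ t ^ ((α : ℝ) + m - 1) * (C * t ^ (N + 1)) := by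
          rw [h1]
          exact mul_le_mul_of_nonneg_left (hRbound t ⟨ht0.le, ht.2.le⟩)
            (Real.rpow_nonneg ht0.le _)
      _ = C * (t ^ ((α : ℝ) + m - 1) * (t : ℝ) ^ (N + 1)) := by ring
      _ = C := by rw [h2, mul_one]
  have hφc : ContinuousOn φ (Set.Icc 0 ε₀) := hφ.continuousOn
  have hgc : ContinuousOn g (Set.Ioo 0 ε₀) := by
    apply ContinuousOn.mul
    · intro t ht
      exact (Real.continuousAt_rpow_const t _ (Or.inl (ne_of_gt ht.1))).continuousWithinAt
    · exact ((hφc.mono Set.Ioo_subset_Icc_self).sub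
        (continuous_finset_sum _ (fun j _ =>
          (continuous_const.mul (continuous_pow j)).div_const _)).continuousOn)
  have hg_int : IntegrableOn g (Set.Ioo 0 ε₀) := by
    refine Integrable.mono' (g := fun _ : ℝ => C) ((integrableOn_const_iff (C := C)).mpr (Or.inr measure_Ioo_lt_top))
      (hgc.aestronglyMeasurable measurableSet_Ioo) ?_
    filter_upwards [ae_restrict_mem measurableSet_Ioo] with t ht
    exact hgbound t ht
  refine ⟨hg_int, ?_⟩
  -- the integral over `Ioc 0 ε` tends to `0`
  have h0 : Filter.Tendsto (fun ε : ℝ => ∫ t in Set.Ioc 0 ε, g t)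
      (nhdsWithin 0 (Set.Ioi 0)) (nhds 0) := by
    apply squeeze_zero_norm'
    · filter_upwards [Ioo_mem_nhdsGT_of_mem
        (show (0:ℝ) ∈ Set.Ico 0 ε₀ from ⟨le_refl 0, hε₀⟩)] with ε hε
      have hsub : Set.Ioc (0:ℝ) ε ⊆ Set.Ioo 0 ε₀ :=
        fun t ht => ⟨ht.1, lt_of_le_of_lt ht.2 hε.2⟩
      calc ‖∫ t in Set.Ioc 0 ε, g t‖ ≤ C * (volume (Set.Ioc (0:ℝ) ε)).toReal :=
            norm_setIntegral_le_of_norm_le_const measure_Ioc_lt_top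
              (fun t ht => hgbound t (hsub ht))
        _ = C * ε := by
            rw [Real.volume_Ioc, sub_zero, ENNReal.toReal_ofReal hε.1.le]
    · have : Filter.Tendsto (fun ε : ℝ => C * ε) (nhds (0:ℝ)) (nhds (C * 0)) :=
        (continuous_const.mul continuous_id).tendsto 0
      simpa using this.mono_left nhdsWithin_le_nhds
  -- key identity on `Ioo 0 ε₀`
  have key : ∀ ε ∈ Set.Ioo (0:ℝ) ε₀,
      (∫ t in ε..ε₀, t ^ ((α : ℝ) + m - 1) * φ t) +
        (∑ j ∈ Finset.range N,
          d j / (((α : ℝ) + m + j) * (j.factorial : ℝ)) * ε ^ ((α : ℝ) + m + j)) +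
        d N / (N.factorial : ℝ) * Real.log ε
      = ((∑ j ∈ Finset.range N,
          d j / (((α : ℝ) + m + j) * (j.factorial : ℝ)) * ε₀ ^ ((α : ℝ) + m + j)) +
        d N / (N.factorial : ℝ) * Real.log ε₀ + ∫ t in Set.Ioo (0:ℝ) ε₀, g t)
        - ∫ t in Set.Ioc 0 ε, g t := by
    intro ε hε
    have hεε₀ : ε ≤ ε₀ := hε.2.le
    have hunion : Set.Ioc (0:ℝ) ε ∪ Set.Ioo ε ε₀ = Set.Ioo 0 ε₀ :=
      Set.Ioc_union_Ioo_eq_Ioo hε.1.le hε.2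
    have hsplit : ∫ t in Set.Ioo (0:ℝ) ε₀, g t
        = (∫ t in Set.Ioc 0 ε, g t) + ∫ t in Set.Ioo ε ε₀, g t := by
      rw [← hunion]
      exact setIntegral_union
        (Set.disjoint_left.mpr fun t ht ht' => absurd ht'.1 (not_lt.mpr ht.2))
        measurableSet_Ioo
        (hg_int.mono_set (by rw [← hunion]; exact Set.subset_union_left))
        (hg_int.mono_set (by rw [← hunion]; exact Set.subset_union_right))
    have hIoo : ∫ t in ε..ε₀, g t = ∫ t in Set.Ioo ε ε₀, g t := by
      rw [intervalIntegral.integral_of_le hεε₀, MeasureTheory.integral_Ioc_eq_integral_Ioo]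
    have huIcc : Set.uIcc ε ε₀ = Set.Icc ε ε₀ := Set.uIcc_of_le hεε₀
    have hpos : ∀ t ∈ Set.uIcc ε ε₀, 0 < t := by
      rw [huIcc]; exact fun t ht => lt_of_lt_of_le hε.1 ht.1
    have hmem : ∀ t ∈ Set.uIcc ε ε₀, t ∈ Set.Icc 0 ε₀ := by
      rw [huIcc]; exact fun t ht => ⟨le_trans hε.1.le ht.1, ht.2⟩
    have h0u : (0:ℝ) ∉ Set.uIcc ε ε₀ := fun h => absurd (hpos 0 h) (lt_irrefl 0)
    have hrc : ContinuousOn (fun t : ℝ => t ^ ((α:ℝ) + m - 1)) (Set.uIcc ε ε₀) :=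
      fun t ht => (Real.continuousAt_rpow_const t _
        (Or.inl (ne_of_gt (hpos t ht)))).continuousWithinAt
    have hTc : ContinuousOn
        (fun t : ℝ => ∑ j ∈ Finset.range (N + 1), d j * t ^ j / (j.factorial : ℝ))
        (Set.uIcc ε ε₀) := (continuous_finset_sum _ (fun j _ =>
          (continuous_const.mul (continuous_pow j)).div_const _)).continuousOn
    have hφc' : ContinuousOn φ (Set.uIcc ε ε₀) := hφc.mono (fun t ht => hmem t ht)
    have hint1 : IntervalIntegrable
        (fun t : ℝ => t ^ ((α:ℝ) + m - 1) *
          ∑ j ∈ Finset.range (N + 1), d j * t ^ j / (j.factorial : ℝ)) volume ε ε₀ :=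
      (hrc.mul hTc).intervalIntegrable
    have hint2 : IntervalIntegrable g volume ε ε₀ := by
      rw [hg]; exact (hrc.mul (hφc'.sub hTc)).intervalIntegrable
    have hdecomp : ∫ t in ε..ε₀, t ^ ((α:ℝ) + m - 1) * φ t
        = (∫ t in ε..ε₀, t ^ ((α:ℝ) + m - 1) *
            ∑ j ∈ Finset.range (N + 1), d j * t ^ j / (j.factorial : ℝ))
          + ∫ t in ε..ε₀, g t := by
      rw [← intervalIntegral.integral_add hint1 hint2]
      apply intervalIntegral.integral_congr
      intro t ht
      simp only [hg]
      ring
    have hTay : ∫ t in ε..ε₀, t ^ ((α:ℝ) + m - 1) *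
          ∑ j ∈ Finset.range (N + 1), d j * t ^ j / (j.factorial : ℝ)
        = (∑ j ∈ Finset.range N, d j / (j.factorial : ℝ) *
            ((ε₀ ^ ((α:ℝ) + m + j) - ε ^ ((α:ℝ) + m + j)) / ((α:ℝ) + m + j)))
          + d N / (N.factorial : ℝ) * (Real.log ε₀ - Real.log ε) := by
      have e1 : ∫ t in ε..ε₀, t ^ ((α:ℝ) + m - 1) *
            ∑ j ∈ Finset.range (N + 1), d j * t ^ j / (j.factorial : ℝ)
          = ∑ j ∈ Finset.range (N + 1),
            ∫ t in ε..ε₀, d j / (j.factorial : ℝ) * t ^ ((α:ℝ) + m - 1 + j) := by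
        rw [← intervalIntegral.integral_finset_sum]
        · apply intervalIntegral.integral_congr
          intro t ht
          dsimp only
          rw [Finset.mul_sum]
          refine Finset.sum_congr rfl fun j hj => ?_
          rw [Real.rpow_add (hpos t ht), Real.rpow_natCast]
          ring
        · intro j hj
          exact (continuousOn_const.mul (fun t ht =>
            (Real.continuousAt_rpow_const t _
              (Or.inl (ne_of_gt (hpos t ht)))).continuousWithinAt)).intervalIntegrable
      rw [e1, Finset.sum_range_succ]
      congr 1
      · refine Finset.sum_congr rfl fun j hj => ?_
        have hjN : (j:ℝ) < N := by exact_mod_cast Finset.mem_range.mp hj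
        have hne : (α:ℝ) + m - 1 + j ≠ -1 := by
          intro h; rw [hr] at h; linarith
        rw [intervalIntegral.integral_const_mul, integral_rpow (Or.inr ⟨hne, h0u⟩)]
        have hee : (α:ℝ) + m - 1 + j + 1 = (α:ℝ) + m + j := by ring
        rw [hee]
      · rw [intervalIntegral.integral_const_mul]
        have hexp : (α:ℝ) + m - 1 + N = -1 := by rw [hr]; ring
        rw [hexp]
        have h1d : ∫ t in ε..ε₀, (t:ℝ) ^ (-1:ℝ) = ∫ t in ε..ε₀, 1 / t := by
          apply intervalIntegral.integral_congr
          intro t ht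
          dsimp only
          rw [Real.rpow_neg_one, one_div]
        rw [h1d, integral_one_div h0u,
          Real.log_div (ne_of_gt (lt_trans hε.1 hε.2)) (ne_of_gt hε.1)]
    rw [hdecomp, hIoo, hTay, hsplit]
    have hsum : ∀ j ∈ Finset.range N,
        d j / (j.factorial : ℝ) *
            ((ε₀ ^ ((α:ℝ) + m + j) - ε ^ ((α:ℝ) + m + j)) / ((α:ℝ) + m + j))
          + d j / (((α:ℝ) + m + j) * (j.factorial : ℝ)) * ε ^ ((α:ℝ) + m + j)
        = d j / (((α:ℝ) + m + j) * (j.factorial : ℝ)) * ε₀ ^ ((α:ℝ) + m + j) := by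
      intro j hj
      have hjN : (j:ℝ) < N := by exact_mod_cast Finset.mem_range.mp hj
      have hcj : (α:ℝ) + m + j ≠ 0 := by
        intro h
        have : (α:ℝ) + m - 1 = -((N:ℝ) + 1) := hr
        linarith
      have hfj : (j.factorial : ℝ) ≠ 0 := Nat.cast_ne_zero.mpr j.factorial_ne_zero
      field_simp
      ring
    rw [← Finset.sum_congr rfl hsum, Finset.sum_add_distrib]
    ring
  have hlim : Filter.Tendsto
      (fun ε : ℝ => ((∑ j ∈ Finset.range N,
          d j / (((α : ℝ) + m + j) * (j.factorial : ℝ)) * ε₀ ^ ((α : ℝ) + m + j)) +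
        d N / (N.factorial : ℝ) * Real.log ε₀ + ∫ t in Set.Ioo (0:ℝ) ε₀, g t)
        - ∫ t in Set.Ioc 0 ε, g t)
      (nhdsWithin 0 (Set.Ioi 0))
      (nhds ((∑ j ∈ Finset.range N,
          d j / (((α : ℝ) + m + j) * (j.factorial : ℝ)) * ε₀ ^ ((α : ℝ) + m + j)) +
        d N / (N.factorial : ℝ) * Real.log ε₀ + ∫ t in Set.Ioo (0:ℝ) ε₀, g t)) := by
    simpa using tendsto_const_nhds.sub h0
  apply hlim.congr'
  filter_upwards [Ioo_mem_nhdsGT_of_mem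
    (show (0:ℝ) ∈ Set.Ico 0 ε₀ from ⟨le_refl 0, hε₀⟩)] with ε hε
  exact (key ε hε).symm
end

section
/- Let m ≥ 1 be an integer and let α < −m be a real number that is not an integer. Set N = ⌊−α⌋ − m. Let ε₀ > 0 and let φ : ℝ → ℝ be of class C^{N+1} on [0, ε₀], with T(t) = Σ_{j=0}^{N} φ^{(j)}(0) t^j / j! its degree-N Taylor polynomial at 0. Suppose there are constants σ ≥ 0 and b̄ ≥ 0 such that |φ(0)| ≤ σ and |φ^{(j)}(t)| ≤ b̄ for all 1 ≤ j ≤ N+1 and all t ∈ [0, ε₀]. Then the Hadamard finite part L = Σ_{j=0}^{N} (φ^{(j)}(0)/((α+m+j) j!)) ε₀^{α+m+j} + ∫_0^{ε₀} t^{α+m−1}(φ(t) − T(t)) dt satisfies |L| ≤ (σ/|α+m|) · ε₀^{α+m} + Σ_{j=1}^{N+1} (b̄/(|α+m+j| · j!)) · ε₀^{α+m+j}. -/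
open MeasureTheory intervalIntegral

private lemma Icc_evEq {u v y : ℝ} (hyu : y < u) (huv : u ≤ v) :
    Set.Icc (0:ℝ) u =ᶠ[nhds y] Set.Icc (0:ℝ) v := by
  apply Filter.eventuallyEq_set.2
  filter_upwards [Metric.ball_mem_nhds y (by linarith : (0:ℝ) < u - y)] with z hz
  rw [Metric.mem_ball, Real.dist_eq, abs_lt] at hz
  simp only [Set.mem_Icc]
  constructor <;> intro h <;> exact ⟨h.1, by linarith [hz.2]⟩

private lemma iterDW_congr_set {f : ℝ → ℝ} {s t : Set ℝ} {x : ℝ} (h : s =ᶠ[nhds x] t) (n : ℕ) :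
    iteratedDerivWithin n f s x = iteratedDerivWithin n f t x := by
  simp only [iteratedDerivWithin]
  rw [iteratedFDerivWithin_congr_set h]

/-- Bound on Hadamard's finite part: for `α < -m` not an integer,
`N = ⌊-α⌋ - m`, `φ` of class `C^{N+1}` on `[0, ε₀]` with `|φ 0| ≤ σ` and
`|φ^{(j)}| ≤ b̄` on `[0, ε₀]` for `1 ≤ j ≤ N+1`, the finite part
`L = Σ_j φ^{(j)}(0)/((α+m+j) j!) ε₀^{α+m+j} + ∫_0^{ε₀} t^{α+m-1}(φ t - T t) dt`
satisfies `|L| ≤ (σ/|α+m|) ε₀^{α+m} + Σ_{j=1}^{N+1} (b̄/(|α+m+j| j!)) ε₀^{α+m+j}`. -/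
theorem stmt_5 (m : ℕ) (hm : 1 ≤ m) (α : ℝ) (hα : α < -(m : ℝ))
    (hαint : ∀ n : ℤ, α ≠ (n : ℝ))
    (N : ℕ) (hN : (N : ℤ) = ⌊-α⌋ - m)
    (ε₀ : ℝ) (hε₀ : 0 < ε₀) (φ : ℝ → ℝ)
    (hφ : ContDiffOn ℝ (N + 1) φ (Set.Icc 0 ε₀))
    (σ b : ℝ) (hσ0 : 0 ≤ σ) (hb0 : 0 ≤ b)
    (hσ : |φ 0| ≤ σ)
    (hb : ∀ j : ℕ, 1 ≤ j → j ≤ N + 1 → ∀ t ∈ Set.Icc (0 : ℝ) ε₀,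
      |iteratedDerivWithin j φ (Set.Icc 0 ε₀) t| ≤ b) :
    |(∑ j ∈ Finset.range (N + 1),
        iteratedDerivWithin j φ (Set.Icc 0 ε₀) 0 / ((α + m + j) * (j.factorial : ℝ))
          * ε₀ ^ (α + m + j)) +
      ∫ t in Set.Ioo (0 : ℝ) ε₀, t ^ (α + m - 1) *
        (φ t - ∑ j ∈ Finset.range (N + 1),
          iteratedDerivWithin j φ (Set.Icc 0 ε₀) 0 * t ^ j / (j.factorial : ℝ))| ≤
    σ / |α + m| * ε₀ ^ (α + m) +
      ∑ j ∈ Finset.Icc 1 (N + 1), b / (|α + m + j| * (j.factorial : ℝ)) * ε₀ ^ (α + m + j) := by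
  have hm1 : (1:ℝ) ≤ m := by exact_mod_cast hm
  have hfl : ((⌊-α⌋ : ℤ) : ℝ) < -α := by
    rcases lt_or_eq_of_le (Int.floor_le (-α)) with h | h
    · exact h
    · exact absurd (by push_cast; linarith : α = ((-⌊-α⌋ : ℤ) : ℝ)) (hαint _)
  have hfl2 : -α < (⌊-α⌋ : ℝ) + 1 := Int.lt_floor_add_one (-α)
  have hNr : (N : ℝ) = ((⌊-α⌋ : ℤ) : ℝ) - m := by exact_mod_cast hN
  have hβN : α + m + N < 0 := by rw [hNr]; linarith
  have hβN1 : 0 < α + m + N + 1 := by rw [hNr]; linarith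
  have hβ : α + m < 0 := by linarith
  have h0mem : (0:ℝ) ∈ Set.Icc (0:ℝ) ε₀ := ⟨le_rfl, hε₀.le⟩
  have hF : (0:ℝ) < ((N+1).factorial : ℝ) := by positivity
  -- Taylor remainder bound on (0, ε₀)
  have hTay : ∀ x ∈ Set.Ioo (0:ℝ) ε₀,
      |φ x - ∑ j ∈ Finset.range (N + 1),
          iteratedDerivWithin j φ (Set.Icc 0 ε₀) 0 * x ^ j / (j.factorial : ℝ)|
        ≤ b * x ^ (N+1) / ((N+1).factorial : ℝ) := by
    intro x hx
    have hx0 : 0 < x := hx.1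
    have hxε : x < ε₀ := hx.2
    have hsub : Set.Icc (0:ℝ) x ⊆ Set.Icc 0 ε₀ := Set.Icc_subset_Icc le_rfl hxε.le
    have hcd : ContDiffOn ℝ N φ (Set.Icc 0 x) :=
      (hφ.of_le (by exact_mod_cast Nat.le_succ N)).mono hsub
    have hbig : DifferentiableOn ℝ (iteratedDerivWithin N φ (Set.Icc 0 ε₀)) (Set.Icc 0 ε₀) :=
      hφ.differentiableOn_iteratedDerivWithin (by exact_mod_cast Nat.lt_succ_self N)
        (uniqueDiffOn_Icc hε₀)
    have hdiff : DifferentiableOn ℝ (iteratedDerivWithin N φ (Set.Icc 0 x)) (Set.Ioo 0 x) := by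
      intro y hy
      have hDA : DifferentiableAt ℝ (iteratedDerivWithin N φ (Set.Icc 0 ε₀)) y :=
        (hbig y ⟨hy.1.le, (hy.2.trans hxε).le⟩).differentiableAt
          (Icc_mem_nhds hy.1 (hy.2.trans hxε))
      have hfun : (iteratedDerivWithin N φ (Set.Icc 0 x))
          =ᶠ[nhds y] (iteratedDerivWithin N φ (Set.Icc 0 ε₀)) := by
        filter_upwards [Ioo_mem_nhds hy.1 hy.2] with z hz
        exact iterDW_congr_set (Icc_evEq hz.2 hxε.le) N
      exact (hfun.differentiableAt_iff.2 hDA).differentiableWithinAt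
    have hLag := taylor_mean_remainder_lagrange (ne_of_lt hx0)
      (by rwa [Set.uIcc_of_le hx0.le]) (by rwa [Set.uIcc_of_le hx0.le, Set.uIoo_of_le hx0.le])
    rw [Set.uIcc_of_le hx0.le, Set.uIoo_of_le hx0.le] at hLag
    obtain ⟨x', hx', hform⟩ := hLag
    have hT : taylorWithinEval φ N (Set.Icc 0 x) 0 x
        = ∑ j ∈ Finset.range (N + 1),
            iteratedDerivWithin j φ (Set.Icc 0 ε₀) 0 * x ^ j / (j.factorial : ℝ) := by
      rw [taylor_within_apply]
      refine Finset.sum_congr rfl fun j hj => ?_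
      rw [iterDW_congr_set (Icc_evEq hx0 hxε.le) j]
      simp only [smul_eq_mul, sub_zero]
      ring
    rw [hT] at hform
    rw [hform, iterDW_congr_set (Icc_evEq hx'.2 hxε.le) (N+1), sub_zero, abs_div, abs_mul,
      abs_pow, abs_of_pos hx0, Nat.abs_cast]
    gcongr
    exact hb (N+1) (by omega) le_rfl x' ⟨hx'.1.le, (hx'.2.trans hxε).le⟩
  -- bound the integral
  have hg_int : IntegrableOn
      (fun t : ℝ => b / ((N+1).factorial : ℝ) * t ^ (α + m + N)) (Set.Ioo 0 ε₀) :=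
    ((integrableOn_Ioo_rpow_iff hε₀).2 (by linarith)).const_mul _
  have hI : |∫ t in Set.Ioo (0 : ℝ) ε₀, t ^ (α + m - 1) *
        (φ t - ∑ j ∈ Finset.range (N + 1),
          iteratedDerivWithin j φ (Set.Icc 0 ε₀) 0 * t ^ j / (j.factorial : ℝ))|
      ≤ b / (|α + m + ((N+1 : ℕ) : ℝ)| * ((N+1).factorial : ℝ)) * ε₀ ^ (α + m + ((N+1:ℕ):ℝ)) := by
    have key : ∀ᵐ t ∂(volume.restrict (Set.Ioo (0:ℝ) ε₀)),
        ‖t ^ (α + m - 1) * (φ t - ∑ j ∈ Finset.range (N + 1),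
          iteratedDerivWithin j φ (Set.Icc 0 ε₀) 0 * t ^ j / (j.factorial : ℝ))‖
        ≤ b / ((N+1).factorial : ℝ) * t ^ (α + m + N) := by
      rw [ae_restrict_iff' measurableSet_Ioo]
      filter_upwards with t ht
      have ht0 : 0 < t := ht.1
      rw [Real.norm_eq_abs, abs_mul, abs_of_pos (Real.rpow_pos_of_pos ht0 _)]
      calc t ^ (α + m - 1) * |φ t - ∑ j ∈ Finset.range (N + 1),
              iteratedDerivWithin j φ (Set.Icc 0 ε₀) 0 * t ^ j / (j.factorial : ℝ)|
          ≤ t ^ (α + m - 1) * (b * t ^ (N+1) / ((N+1).factorial : ℝ)) :=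
            mul_le_mul_of_nonneg_left (hTay t ht) (Real.rpow_pos_of_pos ht0 _).le
        _ = b / ((N+1).factorial : ℝ) * (t ^ (α + m - 1) * t ^ (((N+1:ℕ)) : ℝ)) := by
            rw [Real.rpow_natCast]; ring
        _ = b / ((N+1).factorial : ℝ) * t ^ (α + m + N) := by
            rw [← Real.rpow_add ht0]
            congr 1
            push_cast
            ring
    have hmain : |∫ t in Set.Ioo (0 : ℝ) ε₀, t ^ (α + m - 1) *
        (φ t - ∑ j ∈ Finset.range (N + 1),
          iteratedDerivWithin j φ (Set.Icc 0 ε₀) 0 * t ^ j / (j.factorial : ℝ))|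
        ≤ ∫ t in Set.Ioo (0:ℝ) ε₀, b / ((N+1).factorial : ℝ) * t ^ (α + m + N) := by
      rw [← Real.norm_eq_abs]
      exact norm_integral_le_of_norm_le hg_int key
    have hval : ∫ t in Set.Ioo (0:ℝ) ε₀, b / ((N+1).factorial : ℝ) * t ^ (α + m + N)
        = b / ((N+1).factorial : ℝ) * (ε₀ ^ (α + m + N + 1) / (α + m + N + 1)) := by
      rw [MeasureTheory.integral_const_mul]
      congr 1
      rw [← integral_Ioc_eq_integral_Ioo, ← integral_of_le hε₀.le,
        integral_rpow (Or.inl (by linarith)),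
        Real.zero_rpow (by linarith : α + (m:ℝ) + N + 1 ≠ 0)]
      ring
    refine (hmain.trans (le_of_eq hval)).trans (le_of_eq ?_)
    have hexp : α + (m:ℝ) + ((N+1:ℕ):ℝ) = α + m + N + 1 := by push_cast; ring
    rw [hexp, abs_of_pos hβN1, div_mul_div_comm, div_mul_eq_mul_div,
      mul_comm (((N+1).factorial : ℝ)) (α + ↑m + ↑N + 1)]
  -- bound the sum
  have hsum : |∑ j ∈ Finset.range (N + 1),
        iteratedDerivWithin j φ (Set.Icc 0 ε₀) 0 / ((α + m + j) * (j.factorial : ℝ))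
          * ε₀ ^ (α + m + j)|
      ≤ σ / |α + m| * ε₀ ^ (α + m)
        + ∑ j ∈ Finset.Icc 1 N, b / (|α + m + j| * (j.factorial : ℝ)) * ε₀ ^ (α + m + j) := by
    refine (Finset.abs_sum_le_sum_abs _ _).trans ?_
    rw [Finset.sum_range_succ']
    have h0 : |iteratedDerivWithin 0 φ (Set.Icc 0 ε₀) 0
          / ((α + m + ((0:ℕ):ℝ)) * ((Nat.factorial 0 : ℕ) : ℝ)) * ε₀ ^ (α + m + ((0:ℕ):ℝ))|
        ≤ σ / |α + m| * ε₀ ^ (α + m) := by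
      simp only [iteratedDerivWithin_zero, Nat.cast_zero, add_zero, Nat.factorial_zero,
        Nat.cast_one, mul_one]
      rw [abs_mul, abs_div, abs_of_pos (Real.rpow_pos_of_pos hε₀ _)]
      exact mul_le_mul_of_nonneg_right
        ((div_le_div_iff_of_pos_right (abs_pos.2 (ne_of_lt hβ))).2 hσ) (Real.rpow_pos_of_pos hε₀ _).le
    have hterm : ∀ i ∈ Finset.range N,
        |iteratedDerivWithin (i+1) φ (Set.Icc 0 ε₀) 0
            / ((α + m + ((i+1:ℕ):ℝ)) * (((i+1).factorial : ℕ) : ℝ)) * ε₀ ^ (α + m + ((i+1:ℕ):ℝ))|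
        ≤ b / (|α + m + ((i+1:ℕ):ℝ)| * (((i+1).factorial : ℕ) : ℝ)) * ε₀ ^ (α + m + ((i+1:ℕ):ℝ)) := by
      intro i hi
      rw [abs_mul, abs_div, abs_of_pos (Real.rpow_pos_of_pos hε₀ _), abs_mul, Nat.abs_cast]
      have hne : α + m + ((i+1:ℕ):ℝ) ≠ 0 := by
        have hle : ((i:ℝ)+1) ≤ N := by
          have := Finset.mem_range.1 hi
          exact_mod_cast Nat.succ_le_of_lt this
        push_cast
        intro hcontra
        nlinarith
      have hD : 0 < |α + m + ((i+1:ℕ):ℝ)| * (((i+1).factorial : ℕ) : ℝ) :=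
        mul_pos (abs_pos.2 hne) (by positivity)
      exact mul_le_mul_of_nonneg_right
        ((div_le_div_iff_of_pos_right hD).2 (hb (i+1) (by omega)
          (by have := Finset.mem_range.1 hi; omega) 0 h0mem))
        (Real.rpow_pos_of_pos hε₀ _).le
    calc (∑ i ∈ Finset.range N,
            |iteratedDerivWithin (i+1) φ (Set.Icc 0 ε₀) 0
              / ((α + m + ((i+1:ℕ):ℝ)) * (((i+1).factorial : ℕ) : ℝ))
              * ε₀ ^ (α + m + ((i+1:ℕ):ℝ))|)
          + |iteratedDerivWithin 0 φ (Set.Icc 0 ε₀) 0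
              / ((α + m + ((0:ℕ):ℝ)) * ((Nat.factorial 0 : ℕ) : ℝ)) * ε₀ ^ (α + m + ((0:ℕ):ℝ))|
        ≤ (∑ i ∈ Finset.range N,
            b / (|α + m + ((i+1:ℕ):ℝ)| * (((i+1).factorial : ℕ) : ℝ)) * ε₀ ^ (α + m + ((i+1:ℕ):ℝ)))
          + σ / |α + m| * ε₀ ^ (α + m) := add_le_add (Finset.sum_le_sum hterm) h0
      _ = σ / |α + m| * ε₀ ^ (α + m)
          + ∑ j ∈ Finset.Icc 1 N, b / (|α + m + j| * (j.factorial : ℝ)) * ε₀ ^ (α + m + j) := by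
        rw [add_comm]
        congr 1
        rw [← Finset.Ico_add_one_right_eq_Icc, Finset.sum_Ico_eq_sum_range]
        refine Finset.sum_congr rfl fun i _ => by rw [Nat.add_comm 1 i]
  -- assemble
  have hsplit : ∑ j ∈ Finset.Icc 1 (N + 1), b / (|α + m + j| * (j.factorial : ℝ)) * ε₀ ^ (α + m + j)
      = (∑ j ∈ Finset.Icc 1 N, b / (|α + m + j| * (j.factorial : ℝ)) * ε₀ ^ (α + m + j))
        + b / (|α + m + ((N+1:ℕ):ℝ)| * ((N+1).factorial : ℝ)) * ε₀ ^ (α + m + ((N+1:ℕ):ℝ)) :=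
    Finset.sum_Icc_succ_top (by omega) _
  calc |(∑ j ∈ Finset.range (N + 1),
        iteratedDerivWithin j φ (Set.Icc 0 ε₀) 0 / ((α + m + j) * (j.factorial : ℝ))
          * ε₀ ^ (α + m + j)) +
      ∫ t in Set.Ioo (0 : ℝ) ε₀, t ^ (α + m - 1) *
        (φ t - ∑ j ∈ Finset.range (N + 1),
          iteratedDerivWithin j φ (Set.Icc 0 ε₀) 0 * t ^ j / (j.factorial : ℝ))|
      ≤ |∑ j ∈ Finset.range (N + 1),
        iteratedDerivWithin j φ (Set.Icc 0 ε₀) 0 / ((α + m + j) * (j.factorial : ℝ))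
          * ε₀ ^ (α + m + j)| +
        |∫ t in Set.Ioo (0 : ℝ) ε₀, t ^ (α + m - 1) *
        (φ t - ∑ j ∈ Finset.range (N + 1),
          iteratedDerivWithin j φ (Set.Icc 0 ε₀) 0 * t ^ j / (j.factorial : ℝ))| := abs_add_le _ _
    _ ≤ (σ / |α + m| * ε₀ ^ (α + m)
          + ∑ j ∈ Finset.Icc 1 N, b / (|α + m + j| * (j.factorial : ℝ)) * ε₀ ^ (α + m + j))
        + b / (|α + m + ((N+1:ℕ):ℝ)| * ((N+1).factorial : ℝ)) * ε₀ ^ (α + m + ((N+1:ℕ):ℝ)) :=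
        add_le_add hsum hI
    _ = σ / |α + m| * ε₀ ^ (α + m)
        + ∑ j ∈ Finset.Icc 1 (N + 1), b / (|α + m + j| * (j.factorial : ℝ)) * ε₀ ^ (α + m + j) := by
        rw [hsplit]; ring
end

section
/- Let E be a real inner product space, m ≥ 1, let v ∈ E with ‖v‖ = 1, and let u : Fin m → E be an orthonormal family. Define û_i = 2⟨u_i, v⟩·v − u_i for 1 ≤ i ≤ m. Then det(⟨û_i, u_j⟩)_{1≤i,j≤m} = (−1)^{m−1} · (2 Σ_{i=1}^m ⟨u_i, v⟩² − 1). -/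
/-- For a unit vector `v` and an orthonormal family `u`, with
`ûᵢ = 2⟨uᵢ, v⟩ v - uᵢ`, one has
`det(⟨ûᵢ, uⱼ⟩) = (-1)^{m-1} (2 Σᵢ ⟨uᵢ, v⟩² - 1)`. -/
theorem stmt_11 {E : Type*} [NormedAddCommGroup E] [InnerProductSpace ℝ E]
    (m : ℕ) (hm : 1 ≤ m) (v : E) (hv : ‖v‖ = 1)
    (u : Fin m → E) (hu : Orthonormal ℝ u) :
    (Matrix.of fun i j : Fin m =>
        (inner ℝ ((2 * (inner ℝ (u i) v : ℝ)) • v - u i) (u j) : ℝ)).det =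
      (-1) ^ (m - 1) * (2 * ∑ i, (inner ℝ (u i) v : ℝ) ^ 2 - 1) := by
  set c : Fin m → ℝ := fun i => (inner ℝ (u i) v : ℝ) with hc
  have hA : (Matrix.of fun i j : Fin m =>
        (inner ℝ ((2 * (inner ℝ (u i) v : ℝ)) • v - u i) (u j) : ℝ)) =
      -(1 + Matrix.replicateCol (Fin 1) (fun i => -2 * c i) * Matrix.replicateRow (Fin 1) c) := by
    ext i j
    simp only [Matrix.of_apply, Matrix.neg_apply, Matrix.add_apply, Matrix.mul_apply,
      Matrix.replicateCol_apply, Matrix.replicateRow_apply, Finset.sum_const, Finset.card_univ,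
      Fintype.card_fin, one_smul]
    rw [inner_sub_left, real_inner_smul_left]
    have hsymm : (inner ℝ v (u j) : ℝ) = (inner ℝ (u j) v : ℝ) := real_inner_comm _ _
    rw [hsymm]
    rcases eq_or_ne i j with rfl | h
    · rw [Matrix.one_apply_eq]
      have h1 : (inner ℝ (u i) (u i) : ℝ) = 1 := by
        rw [real_inner_self_eq_norm_mul_norm, hu.1 i]; ring
      rw [h1]; ring
    · rw [Matrix.one_apply_ne h, hu.2 h]
      ring
  rw [hA, Matrix.det_neg]; erw [Matrix.det_one_add_replicateCol_mul_replicateRow (ι := Fin 1) (fun i => -2 * c i) c]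
  have : (dotProduct c fun i => -2 * c i) = -(2 * ∑ i, c i ^ 2) := by
    simp [dotProduct, Finset.mul_sum]
    congr 1; ext i; ring
  rw [this]
  have hm' : (-1 : ℝ) ^ m = (-1) ^ (m - 1) * (-1) := by
    conv_lhs => rw [← Nat.succ_pred_eq_of_pos hm]
    rw [pow_succ, Nat.pred_eq_sub_one]
  rw [Fintype.card_fin, hm']
  ring
end
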